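/- The frequency f_{r,n} := (∑_{q=0}^∞ C(r+kq+n,n) · q · ε^{2q}) / (∑_{q=0}^∞ C(r+kq+n,n) · ε^{2q}) admits the closed form f_{r,n} = ( −r·∑_{j=0}^{k-1} ζ_j^{-r} a_j^{-(n+1)} + F·(n+1)·∑_{j=0}^{k-1} ζ_j^{-r+1} a_j^{-(n+2)} ) / ( k·∑_{j=0}^{k-1} ζ_j^{-r} a_j^{-(n+1)} ), where F := ε^{2/k}, ζ_j := exp(2πij/k), a_j := 1 − ζ_j F. -/

import Mathlib

open Filter

noncomputable section

/-- The frequency `f_{r,n} = (∑_q C(r+kq+n,n) q ε^{2q}) / (∑_q C(r+kq+n,n) ε^{2q})`. -/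
def freq (k : ℕ) (ε : ℝ) (r n : ℕ) : ℝ :=
  (∑' q : ℕ, ((r + k * q + n).choose n : ℝ) * (q : ℝ) * ε ^ (2 * q)) /
    (∑' q : ℕ, ((r + k * q + n).choose n : ℝ) * ε ^ (2 * q))

lemma aux_choose_id (m n : ℕ) :
    (m + 1) * ((m + n + 1).choose n) = (n + 1) * ((m + n + 1).choose (n + 1)) := by
  have h1 := Nat.add_one_mul_choose_eq (m + n) m
  have h2 := Nat.add_one_mul_choose_eq (m + n) n
  have h3 : (m + n).choose m = (m + n).choose n := Nat.choose_symm_add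
  have h4 : (m + n + 1).choose n = (m + n + 1).choose (m + 1) := by
    have := Nat.choose_symm_add (a := m + 1) (b := n)
    rw [show m + 1 + n = m + n + 1 from by omega] at this
    exact this.symm
  calc (m + 1) * ((m + n + 1).choose n) = (m + n + 1).choose (m + 1) * (m + 1) := by
        rw [h4, mul_comm]
    _ = (m + n).succ * (m + n).choose m := h1.symm
    _ = (m + n).succ * (m + n).choose n := by rw [h3]
    _ = (m + n + 1).choose (n + 1) * (n + 1) := h2
    _ = (n + 1) * ((m + n + 1).choose (n + 1)) := mul_comm _ _

lemma aux_hasSum_mul_choose (n : ℕ) {x : ℂ} (hx : ‖x‖ < 1) :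
    HasSum (fun m : ℕ => (m : ℂ) * ((m + n).choose n : ℂ) * x ^ m)
      (((n : ℂ) + 1) * x * (1 / (1 - x) ^ (n + 2))) := by
  set f : ℕ → ℂ := fun m => (m : ℂ) * ((m + n).choose n : ℂ) * x ^ m with hf
  have h := (hasSum_choose_mul_geometric_of_norm_lt_one (n + 1) hx).mul_left (((n : ℂ) + 1) * x)
  have h0 : (fun m : ℕ => f (m + 1))
      = fun m => ((n : ℂ) + 1) * x * (((m + (n + 1)).choose (n + 1) : ℂ) * x ^ m) := by
    funext m
    have key : ((m : ℂ) + 1) * ((m + n + 1).choose n : ℂ)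
        = ((n : ℂ) + 1) * ((m + n + 1).choose (n + 1) : ℂ) := by
      exact_mod_cast congrArg (Nat.cast : ℕ → ℂ) (aux_choose_id m n)
    simp only [hf]
    push_cast
    rw [show m + 1 + n = m + n + 1 by omega, show m + (n + 1) = m + n + 1 by omega]
    rw [pow_succ]
    linear_combination x ^ m * x * key
  have h1 : HasSum (fun m => f (m + 1)) (((n : ℂ) + 1) * x * (1 / (1 - x) ^ (n + 2))) := by
    rw [h0]; convert h using 2
  have := (hasSum_nat_add_iff (f := f) 1).mp h1
  simpa [hf] using this

lemma aux_filter (k : ℕ) (hk : 1 ≤ k) (r : ℕ) (ζ : ℕ → ℂ)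
    (hζ : ∀ j, ζ j = Complex.exp (2 * Real.pi * Complex.I * j / k)) (m : ℕ) :
    ∑ j ∈ Finset.range k, ζ j ^ (-(r : ℤ)) * ζ j ^ m
      = if (k : ℤ) ∣ ((m : ℤ) - r) then (k : ℂ) else 0 := by
  have hπ : (2 * (Real.pi : ℂ) * Complex.I) ≠ 0 := by
    simp [Real.pi_ne_zero, Complex.I_ne_zero]
  have hkC : (k : ℂ) ≠ 0 := Nat.cast_ne_zero.mpr (by omega)
  set d : ℤ := (m : ℤ) - r with hd
  set u : ℂ := Complex.exp ((d : ℂ) * (2 * (Real.pi : ℂ) * Complex.I) / k) with hu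
  have hterm : ∀ j ∈ Finset.range k, ζ j ^ (-(r : ℤ)) * ζ j ^ m = u ^ j := by
    intro j _
    have hz : ζ j ^ (-(r : ℤ)) * ζ j ^ m = ζ j ^ d := by
      rw [← zpow_natCast (ζ j) m, ← zpow_add₀ (by rw [hζ j]; exact Complex.exp_ne_zero _), hd]
      ring_nf
    rw [hz, hζ j, ← Complex.exp_int_mul, ← Complex.exp_nat_mul]
    congr 1
    field_simp
  rw [Finset.sum_congr rfl hterm]
  have huk : u ^ k = 1 := by
    rw [hu, ← Complex.exp_nat_mul]
    rw [show (k : ℂ) * ((d : ℂ) * (2 * (Real.pi : ℂ) * Complex.I) / k)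
        = (d : ℂ) * (2 * (Real.pi : ℂ) * Complex.I) from by field_simp]
    exact Complex.exp_int_mul_two_pi_mul_I d
  by_cases hdvd : (k : ℤ) ∣ d
  · obtain ⟨t, ht⟩ := hdvd
    have hu1 : u = 1 := by
      rw [hu, show ((d : ℂ) * (2 * (Real.pi : ℂ) * Complex.I) / k)
          = (t : ℂ) * (2 * (Real.pi : ℂ) * Complex.I) from by
        have : (d : ℂ) = (k : ℂ) * t := by exact_mod_cast congrArg (Int.cast : ℤ → ℂ) ht
        rw [this]; field_simp]
      exact Complex.exp_int_mul_two_pi_mul_I t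
    rw [if_pos ⟨t, ht⟩]
    simp [hu1]
  · have hu1 : u ≠ 1 := by
      intro h
      obtain ⟨t, ht⟩ := Complex.exp_eq_one_iff.mp (hu ▸ h)
      apply hdvd
      refine ⟨t, ?_⟩
      have : (d : ℂ) = (k : ℂ) * t := by
        rw [div_eq_iff hkC] at ht
        have h2 : (d : ℂ) * (2 * (Real.pi : ℂ) * Complex.I)
            = ((k : ℂ) * t) * (2 * (Real.pi : ℂ) * Complex.I) := by linear_combination ht
        exact mul_right_cancel₀ hπ h2
      exact_mod_cast this
    rw [geom_sum_eq hu1, huk]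
    simp [hdvd]

/-- the frequency `f_{r,n}` admits the closed form
`f_{r,n} = (−r ∑_j ζ_j^{-r} a_j^{-(n+1)} + F(n+1) ∑_j ζ_j^{-r+1} a_j^{-(n+2)})
  / (k ∑_j ζ_j^{-r} a_j^{-(n+1)})` with `F = ε^{2/k}`, `ζ_j = e^{2πij/k}`, `a_j = 1 − ζ_j F`. -/
theorem statement8 (k : ℕ) (hk : 1 ≤ k) (ε : ℝ) (hε0 : 0 < ε) (hε1 : ε < 1)
    (r n : ℕ) (hr : r ≤ k - 1)
    (F : ℝ) (hF : F = ε ^ ((2 : ℝ) / (k : ℝ)))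
    (ζ a : ℕ → ℂ)
    (hζ : ∀ j, ζ j = Complex.exp (2 * Real.pi * Complex.I * j / k))
    (ha : ∀ j, a j = 1 - ζ j * (F : ℂ)) :
    (freq k ε r n : ℂ)
      = (-(r : ℂ) * ∑ j ∈ Finset.range k, ζ j ^ (-(r : ℤ)) * a j ^ (-((n : ℤ) + 1))
          + (F : ℂ) * ((n : ℂ) + 1) *
            ∑ j ∈ Finset.range k, ζ j ^ (-(r : ℤ) + 1) * a j ^ (-((n : ℤ) + 2))) /
        ((k : ℂ) * ∑ j ∈ Finset.range k, ζ j ^ (-(r : ℤ)) * a j ^ (-((n : ℤ) + 1))) := by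
  have hkpos : 0 < k := hk
  have hrk : r < k := by omega
  have hkR : (k : ℝ) ≠ 0 := by positivity
  have hkC : (k : ℂ) ≠ 0 := Nat.cast_ne_zero.mpr (by omega)
  have hF0 : 0 < F := by rw [hF]; positivity
  have hF1 : F < 1 := by rw [hF]; exact Real.rpow_lt_one hε0.le hε1 (by positivity)
  have hFk : F ^ k = ε ^ 2 := by
    rw [hF, ← Real.rpow_natCast (ε ^ ((2 : ℝ) / (k : ℝ))) k, ← Real.rpow_mul hε0.le,
      div_mul_cancel₀ _ hkR, show (2 : ℝ) = ((2 : ℕ) : ℝ) by norm_num, Real.rpow_natCast]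
  have hFC0 : (F : ℂ) ≠ 0 := by exact_mod_cast hF0.ne'
  have hFCnorm : ‖(F : ℂ)‖ < 1 := by
    rw [Complex.norm_real]; rwa [Real.norm_of_nonneg hF0.le]
  have hζ0 : ∀ j, ζ j ≠ 0 := fun j => by rw [hζ j]; exact Complex.exp_ne_zero _
  have hζnorm : ∀ j : ℕ, ‖ζ j‖ = 1 := by
    intro j
    rw [hζ j, show (2 * (Real.pi : ℂ) * Complex.I * j / k)
        = ((2 * Real.pi * j / k : ℝ) : ℂ) * Complex.I by push_cast; ring]
    exact Complex.norm_exp_ofReal_mul_I _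
  have hnorm : ∀ j : ℕ, ‖ζ j * (F : ℂ)‖ < 1 := fun j => by
    rw [norm_mul, hζnorm j, one_mul]; exact hFCnorm
  have hinj : Function.Injective (fun q : ℕ => r + k * q) := by
    intro x y hxy
    simp only at hxy
    exact Nat.eq_of_mul_eq_mul_left hkpos (by omega)
  set T : ℂ := ∑' q : ℕ, ((r + k * q + n).choose n : ℂ) * (F : ℂ) ^ (k * q) with hTdef
  set U : ℂ := ∑' q : ℕ, (q : ℂ) * ((r + k * q + n).choose n : ℂ) * (F : ℂ) ^ (k * q) with hUdef
  -- summability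
  have Sc : ∀ j : ℕ, Summable (fun m : ℕ => ((m + n).choose n : ℂ) * (ζ j * F) ^ m) :=
    fun j => summable_choose_mul_geometric_of_norm_lt_one n (hnorm j)
  have Sd : ∀ j : ℕ, Summable (fun m : ℕ => (m : ℂ) * ((m + n).choose n : ℂ) * (ζ j * F) ^ m) :=
    fun j => (aux_hasSum_mul_choose n (hnorm j)).summable
  have ScF : Summable (fun m : ℕ => ((m + n).choose n : ℂ) * (F : ℂ) ^ m) :=
    summable_choose_mul_geometric_of_norm_lt_one n hFCnorm
  have SdF : Summable (fun m : ℕ => (m : ℂ) * ((m + n).choose n : ℂ) * (F : ℂ) ^ m) :=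
    (aux_hasSum_mul_choose n hFCnorm).summable
  have S1 : Summable (fun q : ℕ => ((r + k * q + n).choose n : ℂ) * (F : ℂ) ^ (r + k * q)) := by
    simpa [Function.comp_def] using ScF.comp_injective hinj
  have Sq : Summable (fun q : ℕ => ((r + k * q + n).choose n : ℂ) * (F : ℂ) ^ (k * q)) := by
    refine (S1.mul_left ((F : ℂ)⁻¹ ^ r)).congr fun q => ?_
    rw [pow_add]
    field_simp
    have hX : (F : ℂ) ^ r * (F : ℂ)⁻¹ ^ r = 1 := by rw [← mul_pow, mul_inv_cancel₀ hFC0, one_pow]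
    linear_combination ((r + k * q + n).choose n : ℂ) * hX
  have S2 : Summable (fun q : ℕ =>
      ((r + k * q : ℕ) : ℂ) * ((r + k * q + n).choose n : ℂ) * (F : ℂ) ^ (r + k * q)) := by
    simpa [Function.comp_def] using SdF.comp_injective hinj
  have Sq' : Summable (fun q : ℕ => (q : ℂ) * ((r + k * q + n).choose n : ℂ) * (F : ℂ) ^ (k * q)) := by
    refine (((S2.mul_left ((F : ℂ)⁻¹ ^ r)).sub (Sq.mul_left (r : ℂ))).mul_left ((k : ℂ)⁻¹)).congr
      fun q => ?_
    rw [pow_add]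
    push_cast
    field_simp
    have hX : (F : ℂ) ^ r * (F : ℂ)⁻¹ ^ r = 1 := by rw [← mul_pow, mul_inv_cancel₀ hFC0, one_pow]
    linear_combination (((r + k * q + n).choose n : ℂ) * r + ((r + k * q + n).choose n : ℂ) * k * q) * hX
  -- support lemma
  have hsupp : ∀ (c : ℕ → ℂ), Function.support
      (fun m : ℕ => c m * (if (k : ℤ) ∣ ((m : ℤ) - r) then (k : ℂ) else 0))
        ⊆ Set.range (fun q : ℕ => r + k * q) := by
    intro c m hm
    have hdvd : (k : ℤ) ∣ ((m : ℤ) - r) := by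
      by_contra h
      simp [Function.mem_support, h] at hm
    obtain ⟨t, ht⟩ := hdvd
    have hmz : (0 : ℤ) ≤ (m : ℤ) := Int.natCast_nonneg m
    have hrz : (r : ℤ) < (k : ℤ) := by exact_mod_cast hrk
    have htnn : 0 ≤ t := by
      by_contra h
      push_neg at h
      have h1 : (k : ℤ) * t ≤ (k : ℤ) * (-1) :=
        mul_le_mul_of_nonneg_left (by omega) (by positivity)
      rw [mul_neg_one] at h1
      linarith
    refine ⟨t.toNat, ?_⟩
    have h2 : (m : ℤ) = (r : ℤ) + (k : ℤ) * (t.toNat : ℤ) := by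
      rw [Int.toNat_of_nonneg htnn]; linarith
    simp only
    exact_mod_cast h2.symm
  -- key A
  have keyA : ∑ j ∈ Finset.range k, ζ j ^ (-(r : ℤ)) * a j ^ (-((n : ℤ) + 1))
      = (k : ℂ) * (F : ℂ) ^ r * T := by
    have hAj : ∀ j : ℕ, a j ^ (-((n : ℤ) + 1))
        = ∑' m : ℕ, ((m + n).choose n : ℂ) * (ζ j * F) ^ m := by
      intro j
      rw [tsum_choose_mul_geometric_of_norm_lt_one n (hnorm j), ha j,
        show -((n : ℤ) + 1) = -(((n + 1 : ℕ)) : ℤ) by push_cast; ring,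
        zpow_neg, zpow_natCast, one_div]
    calc ∑ j ∈ Finset.range k, ζ j ^ (-(r : ℤ)) * a j ^ (-((n : ℤ) + 1))
        = ∑ j ∈ Finset.range k, ∑' m : ℕ,
            ζ j ^ (-(r : ℤ)) * (((m + n).choose n : ℂ) * (ζ j * F) ^ m) := by
          refine Finset.sum_congr rfl fun j _ => ?_
          rw [hAj j, tsum_mul_left]
      _ = ∑' m : ℕ, ∑ j ∈ Finset.range k,
            ζ j ^ (-(r : ℤ)) * (((m + n).choose n : ℂ) * (ζ j * F) ^ m) :=
          (Summable.tsum_finsetSum fun j _ => (Sc j).mul_left _).symm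
      _ = ∑' m : ℕ, ((m + n).choose n : ℂ) * (F : ℂ) ^ m *
            (if (k : ℤ) ∣ ((m : ℤ) - r) then (k : ℂ) else 0) := by
          refine tsum_congr fun m => ?_
          rw [← aux_filter k hk r ζ hζ m, Finset.mul_sum]
          refine Finset.sum_congr rfl fun j _ => ?_
          rw [mul_pow]
          ring
      _ = ∑' q : ℕ, (fun m : ℕ => ((m + n).choose n : ℂ) * (F : ℂ) ^ m *
            (if (k : ℤ) ∣ ((m : ℤ) - r) then (k : ℂ) else 0)) (r + k * q) :=
          (hinj.tsum_eq (hsupp _)).symm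
      _ = ∑' q : ℕ, (k : ℂ) * (F : ℂ) ^ r *
            (((r + k * q + n).choose n : ℂ) * (F : ℂ) ^ (k * q)) := by
          refine tsum_congr fun q => ?_
          simp only
          rw [if_pos ⟨(q : ℤ), by push_cast; ring⟩, pow_add]
          ring
      _ = (k : ℂ) * (F : ℂ) ^ r * T := by rw [tsum_mul_left]
  -- key B
  have keyB : (F : ℂ) * ((n : ℂ) + 1) *
      ∑ j ∈ Finset.range k, ζ j ^ (-(r : ℤ) + 1) * a j ^ (-((n : ℤ) + 2))
      = (k : ℂ) * (F : ℂ) ^ r * ((r : ℂ) * T + (k : ℂ) * U) := by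
    have hBj : ∀ j : ℕ, ((n : ℂ) + 1) * (ζ j * F) * a j ^ (-((n : ℤ) + 2))
        = ∑' m : ℕ, (m : ℂ) * ((m + n).choose n : ℂ) * (ζ j * F) ^ m := by
      intro j
      rw [(aux_hasSum_mul_choose n (hnorm j)).tsum_eq, ha j,
        show -((n : ℤ) + 2) = -(((n + 2 : ℕ)) : ℤ) by push_cast; ring,
        zpow_neg, zpow_natCast, one_div]
    calc (F : ℂ) * ((n : ℂ) + 1) *
        ∑ j ∈ Finset.range k, ζ j ^ (-(r : ℤ) + 1) * a j ^ (-((n : ℤ) + 2))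
        = ∑ j ∈ Finset.range k, ζ j ^ (-(r : ℤ)) *
            (((n : ℂ) + 1) * (ζ j * F) * a j ^ (-((n : ℤ) + 2))) := by
          rw [Finset.mul_sum]
          refine Finset.sum_congr rfl fun j _ => ?_
          rw [zpow_add₀ (hζ0 j), zpow_one]
          ring
      _ = ∑ j ∈ Finset.range k, ∑' m : ℕ,
            ζ j ^ (-(r : ℤ)) * ((m : ℂ) * ((m + n).choose n : ℂ) * (ζ j * F) ^ m) := by
          refine Finset.sum_congr rfl fun j _ => ?_
          rw [hBj j, tsum_mul_left]
      _ = ∑' m : ℕ, ∑ j ∈ Finset.range k,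
            ζ j ^ (-(r : ℤ)) * ((m : ℂ) * ((m + n).choose n : ℂ) * (ζ j * F) ^ m) :=
          (Summable.tsum_finsetSum fun j _ => (Sd j).mul_left _).symm
      _ = ∑' m : ℕ, (m : ℂ) * ((m + n).choose n : ℂ) * (F : ℂ) ^ m *
            (if (k : ℤ) ∣ ((m : ℤ) - r) then (k : ℂ) else 0) := by
          refine tsum_congr fun m => ?_
          rw [← aux_filter k hk r ζ hζ m, Finset.mul_sum]
          refine Finset.sum_congr rfl fun j _ => ?_
          rw [mul_pow]
          ring
      _ = ∑' q : ℕ, (fun m : ℕ => (m : ℂ) * ((m + n).choose n : ℂ) * (F : ℂ) ^ m *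
            (if (k : ℤ) ∣ ((m : ℤ) - r) then (k : ℂ) else 0)) (r + k * q) :=
          (hinj.tsum_eq (hsupp _)).symm
      _ = ∑' q : ℕ, (k : ℂ) * (F : ℂ) ^ r *
            ((r : ℂ) * (((r + k * q + n).choose n : ℂ) * (F : ℂ) ^ (k * q))
              + (k : ℂ) * ((q : ℂ) * ((r + k * q + n).choose n : ℂ) * (F : ℂ) ^ (k * q))) := by
          refine tsum_congr fun q => ?_
          simp only
          rw [if_pos ⟨(q : ℤ), by push_cast; ring⟩, pow_add]
          push_cast
          ring
      _ = (k : ℂ) * (F : ℂ) ^ r * ((r : ℂ) * T + (k : ℂ) * U) := by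
          rw [tsum_mul_left, hTdef, hUdef, Summable.tsum_add (Sq.mul_left _) (Sq'.mul_left _),
            tsum_mul_left, tsum_mul_left]
  -- real side
  have hpow : ∀ q : ℕ, ε ^ (2 * q) = F ^ (k * q) := fun q => by
    rw [pow_mul, pow_mul, hFk]
  have hFR : ‖F‖ < 1 := by rwa [Real.norm_of_nonneg hF0.le]
  have SqR : Summable (fun q : ℕ => ((r + k * q + n).choose n : ℝ) * ε ^ (2 * q)) := by
    have h0 : Summable (fun m : ℕ => ((m + n).choose n : ℝ) * F ^ m) :=
      summable_choose_mul_geometric_of_norm_lt_one n hFR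
    have h1 : Summable (fun q : ℕ => ((r + k * q + n).choose n : ℝ) * F ^ (r + k * q)) := by
      simpa [Function.comp_def] using h0.comp_injective hinj
    refine (h1.mul_left (F⁻¹ ^ r)).congr fun q => ?_
    rw [hpow q, pow_add]
    field_simp
    have hX : F ^ r * F⁻¹ ^ r = 1 := by rw [← mul_pow, mul_inv_cancel₀ hF0.ne', one_pow]
    linear_combination ((r + k * q + n).choose n : ℝ) * hX
  have TrPos : 0 < ∑' q : ℕ, ((r + k * q + n).choose n : ℝ) * ε ^ (2 * q) := by
    refine Summable.tsum_pos SqR (fun q => by positivity) 0 ?_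
    have h0 : 0 < ((r + k * 0 + n).choose n : ℝ) := by
      exact_mod_cast Nat.choose_pos (by omega)
    positivity
  have hTr : ((∑' q : ℕ, ((r + k * q + n).choose n : ℝ) * ε ^ (2 * q) : ℝ) : ℂ) = T := by
    rw [Complex.ofReal_tsum]
    exact tsum_congr fun q => by rw [hpow q]; push_cast; ring
  have hUr : ((∑' q : ℕ, ((r + k * q + n).choose n : ℝ) * (q : ℝ) * ε ^ (2 * q) : ℝ) : ℂ) = U := by
    rw [Complex.ofReal_tsum]
    exact tsum_congr fun q => by rw [hpow q]; push_cast; ring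
  have hTne : T ≠ 0 := by
    rw [← hTr]
    exact_mod_cast TrPos.ne'
  simp only [freq]
  rw [Complex.ofReal_div, hTr, hUr, keyA, keyB]
  have hFpow : (F : ℂ) ^ r ≠ 0 := pow_ne_zero _ hFC0
  field_simp
  ring


end
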